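/- Fix n ≥ 1, an integer k with 1 ≤ k ≤ n, and a sequence (k_1,…,k_{n-1}) of nonnegative integers with k_1+⋯+k_{n-1} = n-k and k_1+⋯+k_j ≤ j for all 1 ≤ j ≤ n-1. Then the number of inversion sequences e ∈ I_n with |e|_0 = k and |e|_{n-i} = k_i for 1 ≤ i ≤ n-1 equals (2-k_1)(3-k_1-k_2)⋯(n-k_1-⋯-k_{n-1}) / (k! k_1! ⋯ k_{n-1}!), which also equals the product of binomial coefficients binom(1,k_1)·binom(2-k_1,k_2)·binom(3-k_1-k_2,k_3)⋯binom(n-k_1-⋯-k_{n-1},k). -/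

import Mathlib

open scoped Classical

open Finset in
private lemma chain_mono' {α : Type*} [DecidableEq α] (A : ℕ → Finset α)
    (hA : ∀ j, A j ⊆ A (j+1)) : ∀ i j : ℕ, i ≤ j → A i ⊆ A j := by
  intro i j hij
  induction j, hij using Nat.le_induction with
  | base => exact Finset.Subset.refl _
  | succ j hij ih => exact ih.trans (hA j)

open Finset in
private lemma chainCount' {α : Type*} [DecidableEq α] [Fintype α] :
    ∀ (m : ℕ) (A : ℕ → Finset α) (c : ℕ → ℕ), (∀ j, A j ⊆ A (j+1)) →
    ((univ : Finset (Fin m → Finset α)).filter (fun S =>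
        (∀ j : Fin m, S j ⊆ A (j:ℕ) ∧ (S j).card = c (j:ℕ)) ∧
        ∀ j j' : Fin m, j ≠ j' → Disjoint (S j) (S j'))).card
      = ∏ j ∈ range m, ((A j).card - ∑ i ∈ range j, c i).choose (c j) := by
  intro m
  induction m with
  | zero => intro A c hA; simp
  | succ m ih =>
    intro A c hA
    rw [Finset.card_eq_sum_card_fiberwise (f := fun S => S 0)
        (t := (A 0).powersetCard (c 0))
        (by intro S hS
            simp only [mem_coe, mem_filter, mem_univ, true_and] at hS
            rw [mem_coe, mem_powersetCard]
            exact (hS.1 0))]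
    have hfib : ∀ T ∈ (A 0).powersetCard (c 0),
        (((univ : Finset (Fin (m+1) → Finset α)).filter (fun S =>
          (∀ j : Fin (m+1), S j ⊆ A (j:ℕ) ∧ (S j).card = c (j:ℕ)) ∧
          ∀ j j' : Fin (m+1), j ≠ j' → Disjoint (S j) (S j'))).filter
            (fun S => S 0 = T)).card
        = ∏ j ∈ range m, ((A (j+1)).card - c 0 - ∑ i ∈ range j, c (i+1)).choose (c (j+1)) := by
      intro T hT
      rw [mem_powersetCard] at hT
      have key : ((univ : Finset (Fin m → Finset α)).filter (fun S =>
          (∀ j : Fin m, S j ⊆ (A ((j:ℕ)+1) \ T) ∧ (S j).card = c ((j:ℕ)+1)) ∧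
          ∀ j j' : Fin m, j ≠ j' → Disjoint (S j) (S j'))).card
          = ∏ j ∈ range m, ((A (j+1)).card - c 0 - ∑ i ∈ range j, c (i+1)).choose (c (j+1)) := by
        rw [ih (fun j => A (j+1) \ T) (fun j => c (j+1))
          (fun j => sdiff_subset_sdiff (hA (j+1)) (Finset.Subset.refl _))]
        refine Finset.prod_congr rfl (fun j _ => ?_)
        show ((A (j+1) \ T).card - _).choose _ = _
        rw [card_sdiff_of_subset (hT.1.trans (chain_mono' A hA 0 (j+1) (Nat.zero_le _))), hT.2]
      rw [← key]
      refine Finset.card_bij' (fun S _ => fun j : Fin m => S j.succ)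
        (fun S' _ => Fin.cons T S') ?_ ?_ ?_ ?_
      · intro S hS
        simp only [mem_filter, mem_univ, true_and] at hS ⊢
        obtain ⟨⟨h1, h2⟩, h0⟩ := hS
        constructor
        · intro j
          refine ⟨?_, by simpa using (h1 j.succ).2⟩
          intro x hx
          rw [mem_sdiff]
          refine ⟨by simpa using (h1 j.succ).1 hx, ?_⟩
          intro hxT
          have := h2 j.succ 0 (Fin.succ_ne_zero j)
          exact (Finset.disjoint_left.mp this hx) (h0 ▸ hxT)
        · intro j j' hjj'
          exact h2 j.succ j'.succ (by simpa using hjj')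
      · intro S' hS'
        simp only [mem_filter, mem_univ, true_and] at hS' ⊢
        obtain ⟨h1, h2⟩ := hS'
        refine ⟨⟨?_, ?_⟩, by simp⟩
        · intro j
          rcases Fin.eq_zero_or_eq_succ j with rfl | ⟨i, rfl⟩
          · simpa using hT
          · simp only [Fin.cons_succ, Fin.val_succ]
            exact ⟨((h1 i).1).trans sdiff_subset, (h1 i).2⟩
        · intro j j' hjj'
          rcases Fin.eq_zero_or_eq_succ j with rfl | ⟨i, rfl⟩ <;>
            rcases Fin.eq_zero_or_eq_succ j' with rfl | ⟨i', rfl⟩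
          · exact absurd rfl hjj'
          · simp only [Fin.cons_succ, Fin.cons_zero]
            exact Finset.disjoint_left.mpr (fun x hx hx' => (mem_sdiff.mp ((h1 i').1 hx')).2 hx)
          · simp only [Fin.cons_succ, Fin.cons_zero]
            exact Finset.disjoint_right.mpr (fun x hx hx' => (mem_sdiff.mp ((h1 i).1 hx')).2 hx)
          · simp only [Fin.cons_succ]
            exact h2 i i' (fun h => hjj' (by rw [h]))
      · intro S hS
        simp only [mem_filter] at hS
        funext j
        rcases Fin.eq_zero_or_eq_succ j with rfl | ⟨i, rfl⟩
        · simp [hS.2]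
        · simp [Fin.cons_succ]
      · intro S' _
        funext j
        simp [Fin.cons_succ]
    rw [Finset.sum_congr rfl hfib, Finset.sum_const, card_powersetCard,
      Finset.prod_range_succ' (fun j => ((A j).card - ∑ i ∈ range j, c i).choose (c j)) m]
    rw [mul_comm]
    congr 1
    · refine Finset.prod_congr rfl (fun j _ => ?_)
      rw [Finset.sum_range_succ' c j]
      congr 1
      omega

open Finset in
private lemma card_filter_le_val' (n a : ℕ) (h : a < n) :
    (univ.filter (fun x : Fin n => a ≤ (x:ℕ))).card = n - a := by
  have heq : univ.filter (fun x : Fin n => a ≤ (x:ℕ)) = Finset.Ici (⟨a, h⟩ : Fin n) := by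
    ext x; simp [Fin.le_def]
  rw [heq, Fin.card_Ici]

open Finset in
private lemma Qlem' (ks : ℕ → ℕ) : ∀ N : ℕ, (∀ j, 1 ≤ j → j ≤ N → ∑ i ∈ Icc 1 j, ks i ≤ j) →
    (∏ j ∈ Icc 1 N, Nat.choose (j - ∑ i ∈ Icc 1 (j-1), ks i) (ks j))
      * (N - ∑ i ∈ Icc 1 N, ks i).factorial
      * ∏ j ∈ Icc 1 N, (ks j).factorial
    = ∏ j ∈ Icc 2 N, (j - ∑ i ∈ Icc 1 (j-1), ks i) := by
  intro N
  induction N with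
  | zero => simp
  | succ N ih =>
    intro h
    have ihN := ih (fun j h1 h2 => h j h1 (h2.trans (Nat.le_succ N)))
    have hs0 : ∑ i ∈ Icc 1 0, ks i = 0 := by simp
    have hsN : ∑ i ∈ Icc 1 N, ks i ≤ N := by
      rcases Nat.eq_zero_or_pos N with rfl | hN0
      · simp
      · exact h N hN0 (Nat.le_succ N)
    have hsS : ∑ i ∈ Icc 1 (N+1), ks i = ∑ i ∈ Icc 1 N, ks i + ks (N+1) :=
      Finset.sum_Icc_succ_top (by omega) ks
    have hsS1 : ∑ i ∈ Icc 1 (N+1), ks i ≤ N + 1 := h (N+1) (by omega) le_rfl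
    have hb : ks (N+1) ≤ N + 1 - ∑ i ∈ Icc 1 N, ks i := by omega
    have e1 : Nat.choose (N + 1 - ∑ i ∈ Icc 1 N, ks i) (ks (N+1)) * (ks (N+1)).factorial
        * (N + 1 - ∑ i ∈ Icc 1 (N+1), ks i).factorial
        = (N + 1 - ∑ i ∈ Icc 1 N, ks i).factorial := by
      have := Nat.choose_mul_factorial_mul_factorial hb
      rwa [show N + 1 - ∑ i ∈ Icc 1 N, ks i - ks (N+1) = N + 1 - ∑ i ∈ Icc 1 (N+1), ks i by omega] at this
    have e2 : (N + 1 - ∑ i ∈ Icc 1 N, ks i).factorial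
        = (N - ∑ i ∈ Icc 1 N, ks i).factorial * (N + 1 - ∑ i ∈ Icc 1 N, ks i) := by
      rw [show N + 1 - ∑ i ∈ Icc 1 N, ks i = (N - ∑ i ∈ Icc 1 N, ks i) + 1 by omega,
        Nat.factorial_succ]
      ring
    have hR : ∏ j ∈ Icc 2 (N+1), (j - ∑ i ∈ Icc 1 (j-1), ks i)
        = (∏ j ∈ Icc 2 N, (j - ∑ i ∈ Icc 1 (j-1), ks i)) * (N + 1 - ∑ i ∈ Icc 1 N, ks i) := by
      rcases Nat.eq_zero_or_pos N with rfl | hN0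
      · simp
      · rw [Finset.prod_Icc_succ_top (by omega)]
        simp
    rw [Finset.prod_Icc_succ_top (by omega : 1 ≤ N + 1),
        Finset.prod_Icc_succ_top (by omega : 1 ≤ N + 1), hR, ← ihN]
    simp only [Nat.add_sub_cancel]
    calc (∏ j ∈ Icc 1 N, Nat.choose (j - ∑ i ∈ Icc 1 (j-1), ks i) (ks j))
          * Nat.choose (N + 1 - ∑ i ∈ Icc 1 N, ks i) (ks (N+1))
          * (N + 1 - ∑ i ∈ Icc 1 (N+1), ks i).factorial
          * ((∏ j ∈ Icc 1 N, (ks j).factorial) * (ks (N+1)).factorial)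
        = (∏ j ∈ Icc 1 N, Nat.choose (j - ∑ i ∈ Icc 1 (j-1), ks i) (ks j))
          * (∏ j ∈ Icc 1 N, (ks j).factorial)
          * (Nat.choose (N + 1 - ∑ i ∈ Icc 1 N, ks i) (ks (N+1)) * (ks (N+1)).factorial
             * (N + 1 - ∑ i ∈ Icc 1 (N+1), ks i).factorial) := by ring
      _ = (∏ j ∈ Icc 1 N, Nat.choose (j - ∑ i ∈ Icc 1 (j-1), ks i) (ks j))
          * (∏ j ∈ Icc 1 N, (ks j).factorial)
          * ((N - ∑ i ∈ Icc 1 N, ks i).factorial * (N + 1 - ∑ i ∈ Icc 1 N, ks i)) := by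
            rw [e1, e2]
      _ = (∏ j ∈ Icc 1 N, Nat.choose (j - ∑ i ∈ Icc 1 (j-1), ks i) (ks j))
          * (N - ∑ i ∈ Icc 1 N, ks i).factorial
          * (∏ j ∈ Icc 1 N, (ks j).factorial)
          * (N + 1 - ∑ i ∈ Icc 1 N, ks i) := by ring

/-- `cnt e j = |e|_j`, the number of entries of the inversion sequence `e` equal to `j`. -/
def cnt {n : ℕ} (e : (i : Fin n) → Fin ((i : ℕ) + 1)) (j : ℕ) : ℕ :=
  (Finset.univ.filter (fun i : Fin n => ((e i : ℕ) = j))).card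

open Finset in
private lemma bridge' (m k : ℕ) (ks c : ℕ → ℕ)
    (hc0 : ∀ j, j < m → c j = ks (j+1)) (hcm : c m = k)
    (hcsum : ∑ j ∈ range (m+1), c j = m+1) :
    (Finset.univ.filter (fun e : (i : Fin (m+1)) → Fin ((i : ℕ) + 1) =>
        cnt e 0 = k ∧ ∀ i ∈ Finset.Icc 1 m, cnt e (m+1-i) = ks i)).card
      = ∏ j ∈ range (m+1),
          Nat.choose ((j+1) - ∑ i ∈ range j, c i) (c j) := by
  have hchain : ∀ j : ℕ, (univ.filter (fun x : Fin (m+1) => m - j ≤ (x:ℕ)))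
      ⊆ (univ.filter (fun x : Fin (m+1) => m - (j+1) ≤ (x:ℕ))) := by
    intro j x hx
    simp only [mem_filter, mem_univ, true_and] at hx ⊢
    omega
  have hA := chainCount' (m+1) (fun j => univ.filter (fun x : Fin (m+1) => m - j ≤ (x:ℕ)))
    c hchain
  refine (Finset.card_bij
    (fun e _ => fun j : Fin (m+1) => univ.filter (fun x : Fin (m+1) => ((e x : ℕ) = m - (j:ℕ))))
    ?_ ?_ ?_).trans (hA.trans ?_)
  · -- maps into chain set
    intro e he
    clear hA
    simp only [mem_filter, mem_univ, true_and] at he ⊢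
    obtain ⟨he0, heI⟩ := he
    constructor
    · intro j
      constructor
      · intro x hx
        simp only [mem_filter, mem_univ, true_and] at hx ⊢
        have := (e x).isLt
        omega
      · by_cases hj : (j:ℕ) < m
        · rw [hc0 (j:ℕ) hj]
          have h2 := heI ((j:ℕ)+1) (mem_Icc.mpr ⟨by omega, by omega⟩)
          rw [show m + 1 - ((j:ℕ)+1) = m - (j:ℕ) by omega] at h2
          exact h2
        · have hjm : (j:ℕ) = m := by have := j.isLt; omega
          rw [hjm, hcm, show m - m = 0 by omega]
          exact he0
    · intro j j' hne
      rw [Finset.disjoint_left]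
      intro x hx hx'
      simp only [mem_filter, mem_univ, true_and] at hx hx'
      have hj := j.isLt
      have hj' := j'.isLt
      have : (j:ℕ) ≠ (j':ℕ) := fun hh => hne (Fin.ext hh)
      omega
  · -- injective
    intro e1 he1 e2 he2 heq
    clear hA
    funext x
    have hex1 := (e1 x).isLt
    have hxm := x.isLt
    have h := congrFun heq ⟨m - (e1 x : ℕ), by omega⟩
    simp only at h
    have hx1 : x ∈ univ.filter (fun y : Fin (m+1) =>
        ((e1 y : ℕ) = m - ((⟨m - (e1 x : ℕ), by omega⟩ : Fin (m+1)):ℕ))) := by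
      simp only [mem_filter, mem_univ, true_and]
      omega
    rw [h] at hx1
    simp only [mem_filter, mem_univ, true_and] at hx1
    exact Fin.ext (by omega)
  · -- surjective
    intro S hS
    clear hA
    simp only [mem_filter, mem_univ, true_and] at hS
    obtain ⟨h1, h2⟩ := hS
    have hcov : ∀ x : Fin (m+1), ∃ j : Fin (m+1), x ∈ S j := by
      have hU : univ.biUnion S = univ := by
        apply Finset.eq_univ_of_card
        rw [Finset.card_biUnion (fun j _ j' _ h => h2 j j' h), Fintype.card_fin]
        calc ∑ j : Fin (m+1), (S j).card
            = ∑ j : Fin (m+1), c (j:ℕ) :=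
              Finset.sum_congr rfl (fun j _ => (h1 j).2)
          _ = ∑ j ∈ range (m+1), c j := Fin.sum_univ_eq_sum_range c (m+1)
          _ = m + 1 := hcsum
      intro x
      have hx : x ∈ univ.biUnion S := by rw [hU]; exact mem_univ x
      simpa using Finset.mem_biUnion.mp hx
    choose g hg using hcov
    have hgbound : ∀ x : Fin (m+1), m - ((g x : ℕ)) ≤ (x:ℕ) := by
      intro x
      have := (h1 (g x)).1 (hg x)
      simp only [mem_filter, mem_univ, true_and] at this
      exact this
    refine ⟨fun x => ⟨m - (g x : ℕ), by have := hgbound x; omega⟩, ?_, ?_⟩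
    · -- membership in source
      simp only [mem_filter, mem_univ, true_and]
      have himg : ∀ j : Fin (m+1),
          univ.filter (fun x : Fin (m+1) => (m - (g x : ℕ) = m - (j:ℕ))) = S j := by
        intro j
        ext x
        simp only [mem_filter, mem_univ, true_and]
        constructor
        · intro hx
          have hgj : g x = j := by
            apply Fin.ext
            have := (g x).isLt
            have := j.isLt
            omega
          exact hgj ▸ hg x
        · intro hx
          have : j = g x := by
            by_contra hne
            exact (Finset.disjoint_left.mp (h2 j (g x) hne) hx) (hg x)
          rw [this]
      constructor
      · show (univ.filter (fun x : Fin (m+1) => ((m - (g x : ℕ) : ℕ) = 0))).card = k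
        have h6 := himg ⟨m, Nat.lt_succ_self m⟩
        simp only [Nat.sub_self] at h6
        rw [h6]
        have h5 := (h1 ⟨m, Nat.lt_succ_self m⟩).2
        simpa [hcm] using h5
      · intro i hi
        rw [mem_Icc] at hi
        show (univ.filter (fun x : Fin (m+1) => ((m - (g x : ℕ) : ℕ) = m + 1 - i))).card = ks i
        have hlt : i - 1 < m + 1 := by omega
        have h3 := himg ⟨i - 1, hlt⟩
        simp only [show m - (i-1) = m + 1 - i by omega] at h3
        rw [h3]
        have h4 := (h1 ⟨i - 1, hlt⟩).2
        simp only at h4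
        rw [hc0 (i-1) (by omega)] at h4
        rw [show (i-1) + 1 = i by omega] at h4
        exact h4
    · -- image equals S
      funext j
      ext x
      simp only [mem_filter, mem_univ, true_and]
      constructor
      · intro hx
        have hgj : g x = j := by
          apply Fin.ext
          have := (g x).isLt
          have := j.isLt
          omega
        exact hgj ▸ hg x
      · intro hx
        have : j = g x := by
          by_contra hne
          exact (Finset.disjoint_left.mp (h2 j (g x) hne) hx) (hg x)
        rw [this]
  · -- product rewriting
    clear hA
    refine Finset.prod_congr rfl (fun j hj => ?_)
    rw [mem_range] at hj
    have := card_filter_le_val' (m+1) (m - j) (by omega)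
    rw [this, show m + 1 - (m - j) = j + 1 by omega]

open Finset in
/-- The number of inversion sequences `e ∈ I_n` of a given type `(k, (k_1,…,k_{n-1}))`
(i.e. `|e|_0 = k` and `|e|_{n-i} = k_i`) equals
`binom(1,k_1) binom(2-k_1,k_2) ⋯ binom(n-k_1-⋯-k_{n-1}, k)`, which also equals
`(2-k_1)(3-k_1-k_2)⋯(n-k_1-⋯-k_{n-1}) / (k! k_1! ⋯ k_{n-1}!)`. -/
theorem card_inversion_sequences_of_type (n k : ℕ) (hn : 1 ≤ n) (hk1 : 1 ≤ k) (hkn : k ≤ n)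
    (ks : ℕ → ℕ)
    (hsum : ∑ i ∈ Finset.Icc 1 (n - 1), ks i = n - k)
    (hpartial : ∀ j ∈ Finset.Icc 1 (n - 1), ∑ i ∈ Finset.Icc 1 j, ks i ≤ j) :
    (Finset.univ.filter (fun e : (i : Fin n) → Fin ((i : ℕ) + 1) =>
        cnt e 0 = k ∧ ∀ i ∈ Finset.Icc 1 (n - 1), cnt e (n - i) = ks i)).card
      = (∏ j ∈ Finset.Icc 1 (n - 1),
          Nat.choose (j - ∑ i ∈ Finset.Icc 1 (j - 1), ks i) (ks j))
        * Nat.choose (n - ∑ i ∈ Finset.Icc 1 (n - 1), ks i) k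
    ∧ ((Finset.univ.filter (fun e : (i : Fin n) → Fin ((i : ℕ) + 1) =>
        cnt e 0 = k ∧ ∀ i ∈ Finset.Icc 1 (n - 1), cnt e (n - i) = ks i)).card : ℚ)
      = (∏ j ∈ Finset.Icc 2 n, ((j : ℚ) - ∑ i ∈ Finset.Icc 1 (j - 1), (ks i : ℚ)))
        / ((k.factorial : ℚ) * ∏ i ∈ Finset.Icc 1 (n - 1), ((ks i).factorial : ℚ)) := by
  obtain ⟨m, rfl⟩ : ∃ m, n = m + 1 := ⟨n - 1, by omega⟩
  simp only [Nat.add_sub_cancel] at hsum hpartial ⊢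
  have hreidx : ∀ j, j ≤ m →
      ∑ i ∈ range j, (if i < m then ks (i+1) else k) = ∑ i ∈ Icc 1 j, ks i := by
    intro j hj
    rw [← Finset.Ico_add_one_right_eq_Icc, Finset.sum_Ico_eq_sum_range]
    refine Finset.sum_congr (by norm_num) (fun i hi => ?_)
    rw [mem_range] at hi
    rw [if_pos (by omega : i < m), Nat.add_comm]
  have hcsum : ∑ j ∈ range (m+1), (if j < m then ks (j+1) else k) = m + 1 := by
    rw [Finset.sum_range_succ, hreidx m le_rfl, if_neg (lt_irrefl m), hsum]
    omega
  have hbridge := bridge' m k ks (fun j => if j < m then ks (j+1) else k)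
    (fun j hj => if_pos hj) (if_neg (lt_irrefl m)) hcsum
  have part1 : (Finset.univ.filter (fun e : (i : Fin (m+1)) → Fin ((i : ℕ) + 1) =>
        cnt e 0 = k ∧ ∀ i ∈ Finset.Icc 1 m, cnt e (m+1-i) = ks i)).card
      = (∏ j ∈ Finset.Icc 1 m,
          Nat.choose (j - ∑ i ∈ Finset.Icc 1 (j - 1), ks i) (ks j))
        * Nat.choose (m + 1 - ∑ i ∈ Finset.Icc 1 m, ks i) k := by
    rw [hbridge, Finset.prod_range_succ]
    congr 1
    · rw [show Icc 1 m = Ico 1 (m+1) by rw [Finset.Ico_add_one_right_eq_Icc],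
        Finset.prod_Ico_eq_prod_range]
      refine Finset.prod_congr (by norm_num) (fun j hj => ?_)
      rw [mem_range] at hj
      rw [hreidx j (by omega), if_pos (by omega : j < m),
        show (1:ℕ) + j = j + 1 from Nat.add_comm 1 j]
      simp only [Nat.add_sub_cancel]
    · rw [hreidx m le_rfl, if_neg (lt_irrefl m)]
  have part2c : (((Finset.univ.filter (fun e : (i : Fin (m+1)) → Fin ((i : ℕ) + 1) =>
        cnt e 0 = k ∧ ∀ i ∈ Finset.Icc 1 m, cnt e (m+1-i) = ks i)).card : ℕ) : ℚ)
      = (∏ j ∈ Finset.Icc 2 (m+1), ((j : ℚ) - ∑ i ∈ Finset.Icc 1 (j - 1), (ks i : ℚ)))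
        / ((k.factorial : ℚ) * ∏ i ∈ Finset.Icc 1 m, ((ks i).factorial : ℚ)) := by
    rcases Nat.eq_zero_or_pos m with rfl | hm
    · have hk : k = 1 := by omega
      rw [part1, hk]
      norm_num
    · have hQ := Qlem' ks m (fun j h1 h2 => hpartial j (mem_Icc.mpr ⟨h1, h2⟩))
      rw [part1, show m + 1 - ∑ i ∈ Icc 1 m, ks i = k by omega, Nat.choose_self, mul_one]
      have hcast : ∀ j ∈ Icc 2 (m+1), ((j:ℚ) - ∑ i ∈ Icc 1 (j-1), (ks i:ℚ))
          = (((j - ∑ i ∈ Icc 1 (j-1), ks i : ℕ)) : ℚ) := by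
        intro j hj
        rw [mem_Icc] at hj
        have hle : ∑ i ∈ Icc 1 (j-1), ks i ≤ j := by
          have := hpartial (j-1) (mem_Icc.mpr ⟨by omega, by omega⟩)
          omega
        rw [Nat.cast_sub hle, Nat.cast_sum]
      rw [Finset.prod_congr rfl hcast, ← Nat.cast_prod]
      have hsplit : (∏ j ∈ Icc 2 (m+1), (j - ∑ i ∈ Icc 1 (j-1), ks i))
          = ((∏ j ∈ Icc 1 m, Nat.choose (j - ∑ i ∈ Icc 1 (j-1), ks i) (ks j))
              * (k-1).factorial * ∏ j ∈ Icc 1 m, (ks j).factorial) * k := by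
        rw [Finset.prod_Icc_succ_top (by omega : 2 ≤ m + 1)]
        simp only [Nat.add_sub_cancel]
        rw [← hQ, show m - ∑ i ∈ Icc 1 m, ks i = k - 1 by omega,
          show m + 1 - ∑ i ∈ Icc 1 m, ks i = k by omega]
      rw [hsplit]
      have hne : ((Nat.factorial k:ℚ) * ∏ i ∈ Icc 1 m, ((ks i).factorial:ℚ)) ≠ 0 := by
        positivity
      rw [eq_div_iff hne]
      have hkfac : k.factorial = k * (k-1).factorial := by
        conv_lhs => rw [show k = (k-1)+1 by omega]
        rw [Nat.factorial_succ, show k - 1 + 1 = k by omega]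
      push_cast [hkfac]
      ring
  constructor
  · convert part1 using 2
    ext e
    simp only [Finset.mem_filter]
  · convert part2c using 4
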